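/- arXiv:1207.0036 — 4 statements merged into one kernel-verified Lean document; each statement's English description precedes it below -/
import Mathlib

section
/- If x̂ is an interior incentive stable state (ISS), i.e. Σ_α φ_α(x) < Σ_α (x̂_α/x_α) φ_α(x) for all x ≠ x̂ in a punctured neighborhood of x̂ within the interior of the simplex, then V(x) = D_KL(x̂||x) has strictly negative derivative along trajectories of the incentive dynamic ẋ_α = φ_α(x) - x_α Σ_β φ_β(x) in that punctured neighborhood; i.e. V is a strict local Lyapunov function at x̂. -/
open Real Finset

theorem iss_implies_lyapunov {α : Type*} [Fintype α]
    (xh : α → ℝ) (hxh0 : ∀ a, 0 < xh a) (hxh1 : ∑ a, xh a = 1)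
    (φ : (α → ℝ) → (α → ℝ))
    (N : Set (α → ℝ)) (hN : N ∈ nhds xh)
    (hISS : ∀ y ∈ N, (∀ a, 0 < y a) → ∑ a, y a = 1 → y ≠ xh →
      (∑ a, φ y a) < ∑ a, (xh a / y a) * φ y a)
    (x : ℝ → α → ℝ)
    (hpos : ∀ t a, 0 < x t a) (hsum : ∀ t, ∑ a, x t a = 1)
    (hode : ∀ t a, HasDerivAt (fun s => x s a)
      (φ (x t) a - x t a * ∑ b, φ (x t) b) t)
    (t : ℝ) (hmem : x t ∈ N) (hne : x t ≠ xh) :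
    deriv (fun s => ∑ a, xh a * Real.log (xh a / x s a)) t < 0 := by
  set S := ∑ b, φ (x t) b with hS
  have hD : HasDerivAt (fun s => ∑ a, xh a * Real.log (xh a / x s a))
      (∑ a, -(xh a / x t a) * (φ (x t) a - x t a * S)) t := by
    apply HasDerivAt.fun_sum
    intro a _
    have h1 : (fun s => xh a * Real.log (xh a / x s a))
        = fun s => xh a * Real.log (xh a) - xh a * Real.log (x s a) := by
      funext s
      rw [Real.log_div (ne_of_gt (hxh0 a)) (ne_of_gt (hpos s a)), mul_sub]
    rw [h1]
    have h2 := ((hode t a).log (ne_of_gt (hpos t a))).const_mul (xh a)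
    have h3 := (hasDerivAt_const t (xh a * Real.log (xh a))).fun_sub h2
    convert h3 using 1
    field_simp
    rw [← hS]
    ring
  rw [hD.deriv]
  have key := hISS (x t) hmem (hpos t) (hsum t) hne
  have hsumeq : ∑ a, -(xh a / x t a) * (φ (x t) a - x t a * S)
      = S * (∑ a, xh a) - ∑ a, (xh a / x t a) * φ (x t) a := by
    rw [Finset.mul_sum, ← Finset.sum_sub_distrib]
    apply Finset.sum_congr rfl
    intro a _
    have hx : x t a ≠ 0 := ne_of_gt (hpos t a)
    field_simp
    ring
  rw [hsumeq, hxh1, mul_one]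
  linarith
end

section
/- If x̂ is an interior ISS for a continuous incentive φ, then x̂ is a rest point of the incentive dynamic: φ_α(x̂) = x̂_α Σ_β φ_β(x̂) for all α. -/
open Finset

theorem interior_iss_is_rest_point {α : Type*} [Fintype α]
    (φ : (α → ℝ) → (α → ℝ))
    (hφ : ContinuousOn φ {x | (∀ a, 0 < x a) ∧ ∑ a, x a = 1})
    (xh : α → ℝ) (hxh0 : ∀ a, 0 < xh a) (hxh1 : ∑ a, xh a = 1)
    (N : Set (α → ℝ)) (hN : N ∈ nhds xh)
    (hISS : ∀ x ∈ N, (∀ a, 0 < x a) → ∑ a, x a = 1 → x ≠ xh →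
      (∑ a, x a * (φ x a / x a)) < ∑ a, xh a * (φ x a / x a)) :
    ∀ a, φ xh a = xh a * ∑ b, φ xh b := by
  classical
  set S : Set (α → ℝ) := {x | (∀ a, 0 < x a) ∧ ∑ a, x a = 1} with hS
  have hopen : IsOpen {x : α → ℝ | ∀ c, 0 < x c} := by
    have : {x : α → ℝ | ∀ c, 0 < x c} = ⋂ c, (fun x : α → ℝ => x c) ⁻¹' Set.Ioi 0 := by
      ext x; simp
    rw [this]
    exact isOpen_iInter_of_finite fun c => (continuous_apply c).isOpen_preimage _ isOpen_Ioi
  have key : ∀ a b : α, φ xh a / xh a ≤ φ xh b / xh b := by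
    intro a b
    rcases eq_or_ne a b with rfl | hab
    · exact le_refl _
    set e : α → ℝ := fun c => (if c = a then 1 else 0) - (if c = b then 1 else 0) with he
    have hea : e a = 1 := by simp [he, hab]
    have hesum : ∑ c, e c = 0 := by
      simp [he, Finset.sum_sub_distrib]
    set p : ℝ → (α → ℝ) := fun t c => xh c + t * e c with hp
    have hp0 : p 0 = xh := by funext c; simp [hp]
    have hpsum : ∀ t, ∑ c, p t c = 1 := by
      intro t
      simp [hp, Finset.sum_add_distrib, ← Finset.mul_sum, hesum, hxh1]
    have hpcont : Continuous p := by
      apply continuous_pi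
      intro c
      exact continuous_const.add (continuous_id.mul continuous_const)
    have hptend : Filter.Tendsto p (nhds 0) (nhds xh) := by
      rw [← hp0]; exact hpcont.tendsto 0
    set l : Filter ℝ := nhdsWithin 0 (Set.Ioi 0) with hl
    have hptendl : Filter.Tendsto p l (nhds xh) := hptend.mono_left nhdsWithin_le_nhds
    have hpos_ev : ∀ᶠ t in l, ∀ c, 0 < p t c :=
      hptendl.eventually_mem (hopen.mem_nhds (by exact hxh0))
    have hN_ev : ∀ᶠ t in l, p t ∈ N := hptendl.eventually_mem hN
    have ht_ev : ∀ᶠ t in l, 0 < t := eventually_mem_nhdsWithin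
    have hne_ev : ∀ᶠ t in l, p t ≠ xh := by
      filter_upwards [ht_ev] with t ht hcontra
      have : p t a = xh a := by rw [hcontra]
      simp [hp, hea] at this
      exact ht.ne' this
    have hlt : ∀ᶠ t in l, φ (p t) a / p t a < φ (p t) b / p t b := by
      filter_upwards [hpos_ev, hN_ev, ht_ev, hne_ev] with t hpos hmem ht hne
      have hiss := hISS (p t) hmem hpos (hpsum t) hne
      set G : α → ℝ := fun c => φ (p t) c / p t c with hG
      have hexp : ∑ c, p t c * G c = (∑ c, xh c * G c) + t * (G a - G b) := by
        have h1 : ∑ c, p t c * G c = ∑ c, (xh c * G c + t * (e c * G c)) := by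
          apply Finset.sum_congr rfl
          intro c _
          simp [hp, he]
          ring
        rw [h1, Finset.sum_add_distrib, ← Finset.mul_sum]
        congr 1
        congr 1
        have : ∑ c, e c * G c = G a - G b := by
          simp [he, sub_mul, Finset.sum_sub_distrib, Finset.sum_ite_eq',
            Finset.mem_univ]
        rw [this]
      rw [hexp] at hiss
      have h2 : t * (G a - G b) < 0 := by linarith
      have h3 : G a - G b < 0 := by
        by_contra h
        push_neg at h
        nlinarith
      simpa [hG] using by linarith
    have hpS_ev : ∀ᶠ t in l, p t ∈ S := by
      filter_upwards [hpos_ev] with t ht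
      exact ⟨ht, hpsum t⟩
    have hptendS : Filter.Tendsto p l (nhdsWithin xh S) :=
      tendsto_nhdsWithin_iff.2 ⟨hptendl, hpS_ev⟩
    have hφp : Filter.Tendsto (fun t => φ (p t)) l (nhds (φ xh)) :=
      (hφ xh ⟨hxh0, hxh1⟩).tendsto.comp hptendS
    have hcoord : ∀ c : α, Filter.Tendsto (fun t => φ (p t) c / p t c) l
        (nhds (φ xh c / xh c)) := by
      intro c
      have h1 : Filter.Tendsto (fun t => φ (p t) c) l (nhds (φ xh c)) :=
        ((continuous_apply c).tendsto (φ xh)).comp hφp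
      have h2 : Filter.Tendsto (fun t => p t c) l (nhds (xh c)) :=
        ((continuous_apply c).tendsto xh).comp hptendl
      exact h1.div h2 (hxh0 c).ne'
    exact le_of_tendsto_of_tendsto (hcoord a) (hcoord b) (hlt.mono fun t h => h.le)
  -- all ratios equal
  intro a
  have hgc : ∀ c, φ xh c / xh c = φ xh a / xh a := fun c =>
    le_antisymm (key c a) (key a c)
  have hval : ∀ c, φ xh c = xh c * (φ xh a / xh a) := by
    intro c
    rw [← hgc c]
    field_simp
    simp [(hxh0 c).ne']
  have hsum : ∑ b, φ xh b = φ xh a / xh a := by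
    calc ∑ b, φ xh b = ∑ b, xh b * (φ xh a / xh a) := by
          exact Finset.sum_congr rfl fun b _ => hval b
      _ = (∑ b, xh b) * (φ xh a / xh a) := by rw [Finset.sum_mul]
      _ = φ xh a / xh a := by rw [hxh1, one_mul]
  rw [hsum, ← hval a]
end

section
/- Along a trajectory of the multi-population incentive dynamics, if x̂ is an ISS (the ISS inequality holds for each population i at the current state x ≠ x̂), then the derivative of V(x) = Σ_i D_KL(x̂_i||x_i) is strictly negative; the derivative of each summand equals Σ_α ((x_{iα} - x̂_{iα})/x_{iα}) φ_{iα}(x). -/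
open Real Finset

theorem multi_population_iss_lyapunov {ι : Type*} [Fintype ι]
    {α : ι → Type*} [∀ i, Fintype (α i)]
    (xh : ∀ i, α i → ℝ) (hxh0 : ∀ i a, 0 < xh i a) (hxh1 : ∀ i, ∑ a, xh i a = 1)
    (φ : (∀ i, α i → ℝ) → ∀ i, α i → ℝ)
    (x : ℝ → ∀ i, α i → ℝ)
    (hpos : ∀ t i a, 0 < x t i a) (hsum : ∀ t i, ∑ a, x t i a = 1)
    (hode : ∀ t i a, HasDerivAt (fun s => x s i a)
      (φ (x t) i a - x t i a * ∑ b, φ (x t) i b) t)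
    (t : ℝ) (hne : x t ≠ xh)
    (hISS : ∀ i, (∑ a, x t i a * (φ (x t) i a / x t i a)) <
                  ∑ a, xh i a * (φ (x t) i a / x t i a)) :
    (∀ i, HasDerivAt (fun s => ∑ a, xh i a * Real.log (xh i a / x s i a))
      (∑ a, ((x t i a - xh i a) / x t i a) * φ (x t) i a) t) ∧
    HasDerivAt (fun s => ∑ i, ∑ a, xh i a * Real.log (xh i a / x s i a))
      (∑ i, ∑ a, ((x t i a - xh i a) / x t i a) * φ (x t) i a) t ∧
    (∑ i, ∑ a, ((x t i a - xh i a) / x t i a) * φ (x t) i a) < 0 := by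
  have hD : ∀ i, HasDerivAt (fun s => ∑ a, xh i a * Real.log (xh i a / x s i a))
      (∑ a, ((x t i a - xh i a) / x t i a) * φ (x t) i a) t := by
    intro i
    set S := ∑ b, φ (x t) i b with hS
    have hterm : ∀ a : α i, HasDerivAt (fun s => xh i a * Real.log (xh i a / x s i a))
        (xh i a * (-((φ (x t) i a - x t i a * S) / x t i a))) t := by
      intro a
      have heq : (fun s => xh i a * Real.log (xh i a / x s i a))
          = fun s => xh i a * (Real.log (xh i a) - Real.log (x s i a)) := by
        funext s
        rw [Real.log_div (ne_of_gt (hxh0 i a)) (ne_of_gt (hpos s i a))]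
      rw [heq]
      have h1 : HasDerivAt (fun s => Real.log (x s i a))
          ((φ (x t) i a - x t i a * S) / x t i a) t :=
        (hode t i a).log (ne_of_gt (hpos t i a))
      have h2 := ((hasDerivAt_const t (Real.log (xh i a))).sub h1).const_mul (xh i a)
      simpa [zero_sub] using h2
    have hsum' : HasDerivAt (fun s => ∑ a, xh i a * Real.log (xh i a / x s i a))
        (∑ a, xh i a * (-((φ (x t) i a - x t i a * S) / x t i a))) t :=
      HasDerivAt.fun_sum (fun a _ => hterm a)
    have heqd : (∑ a, xh i a * (-((φ (x t) i a - x t i a * S) / x t i a)))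
        = ∑ a, ((x t i a - xh i a) / x t i a) * φ (x t) i a := by
      have e1 : ∀ a : α i, xh i a * (-((φ (x t) i a - x t i a * S) / x t i a))
          = xh i a * S - xh i a * (φ (x t) i a / x t i a) := by
        intro a
        have hx := ne_of_gt (hpos t i a)
        field_simp
        ring
      have e2 : ∀ a : α i, ((x t i a - xh i a) / x t i a) * φ (x t) i a
          = φ (x t) i a - xh i a * (φ (x t) i a / x t i a) := by
        intro a
        have hx := ne_of_gt (hpos t i a)
        field_simp
      calc (∑ a, xh i a * (-((φ (x t) i a - x t i a * S) / x t i a)))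
          = ∑ a, (xh i a * S - xh i a * (φ (x t) i a / x t i a)) := by
            exact Finset.sum_congr rfl (fun a _ => e1 a)
        _ = (∑ a, xh i a) * S - ∑ a, xh i a * (φ (x t) i a / x t i a) := by
            rw [Finset.sum_sub_distrib, Finset.sum_mul]
        _ = S - ∑ a, xh i a * (φ (x t) i a / x t i a) := by rw [hxh1 i, one_mul]
        _ = (∑ a, φ (x t) i a) - ∑ a, xh i a * (φ (x t) i a / x t i a) := rfl
        _ = ∑ a, (φ (x t) i a - xh i a * (φ (x t) i a / x t i a)) := by
            rw [Finset.sum_sub_distrib]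
        _ = ∑ a, ((x t i a - xh i a) / x t i a) * φ (x t) i a :=
            Finset.sum_congr rfl (fun a _ => (e2 a).symm)
    rw [heqd] at hsum'
    exact hsum'
  refine ⟨hD, HasDerivAt.fun_sum (fun i _ => hD i), ?_⟩
  have hι : Nonempty ι := by
    by_contra h
    rw [not_nonempty_iff] at h
    exact hne (funext fun i => h.elim i)
  have hneg : ∀ i : ι, (∑ a, ((x t i a - xh i a) / x t i a) * φ (x t) i a) < 0 := by
    intro i
    have heq : (∑ a, ((x t i a - xh i a) / x t i a) * φ (x t) i a)
        = (∑ a, x t i a * (φ (x t) i a / x t i a))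
          - ∑ a, xh i a * (φ (x t) i a / x t i a) := by
      rw [← Finset.sum_sub_distrib]
      refine Finset.sum_congr rfl (fun a _ => ?_)
      have hx := ne_of_gt (hpos t i a)
      field_simp
    rw [heq, sub_neg]
    exact hISS i
  calc (∑ i, ∑ a, ((x t i a - xh i a) / x t i a) * φ (x t) i a)
      < ∑ _i : ι, (0 : ℝ) :=
        Finset.sum_lt_sum_of_nonempty Finset.univ_nonempty (fun i _ => hneg i)
    _ = 0 := by simp
end

section
/- If x̂ is an interior rest point of the incentive dynamic with C¹ incentive φ, and the ISS inequality Σ_α ((x_α - x̂_α)/x_α) φ_α(x) < 0 holds for all x ≠ x̂ in a neighborhood of x̂ in the interior of the simplex, then x̂ is Lyapunov stable for the incentive dynamic restricted to the interior of the simplex. -/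
open Finset

/-- The relative entropy Lyapunov function is positive away from `xh`. -/
lemma iss_V_pos {α : Type*} [Fintype α] (xh x : α → ℝ)
    (hxh : ∀ a, 0 < xh a) (hx : ∀ a, 0 < x a)
    (hxh1 : ∑ a, xh a = 1) (hx1 : ∑ a, x a = 1) (hne : x ≠ xh) :
    0 < ∑ a, xh a * (Real.log (xh a) - Real.log (x a)) := by
  have key : ∑ a, xh a * (Real.log (x a) - Real.log (xh a)) < 0 := by
    obtain ⟨a₀, ha₀⟩ : ∃ a, x a ≠ xh a := by
      by_contra h; push_neg at h; exact hne (funext h)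
    have hlt : ∑ a, xh a * (Real.log (x a) - Real.log (xh a)) <
        ∑ a, (x a - xh a) := by
      refine Finset.sum_lt_sum (fun a _ => ?_) ⟨a₀, Finset.mem_univ a₀, ?_⟩
      · have h1 : Real.log (x a / xh a) ≤ x a / xh a - 1 :=
          Real.log_le_sub_one_of_pos (div_pos (hx a) (hxh a))
        rw [Real.log_div (hx a).ne' (hxh a).ne'] at h1
        have := mul_le_mul_of_nonneg_left h1 (hxh a).le
        calc xh a * (Real.log (x a) - Real.log (xh a))
            ≤ xh a * (x a / xh a - 1) := this
          _ = x a - xh a := by field_simp [(hxh a).ne']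
      · have h1 : Real.log (x a₀ / xh a₀) < x a₀ / xh a₀ - 1 := by
          refine Real.log_lt_sub_one_of_pos (div_pos (hx a₀) (hxh a₀)) ?_
          intro h
          rw [div_eq_one_iff_eq (hxh a₀).ne'] at h
          exact ha₀ h
        rw [Real.log_div (hx a₀).ne' (hxh a₀).ne'] at h1
        have := mul_lt_mul_of_pos_left h1 (hxh a₀)
        calc xh a₀ * (Real.log (x a₀) - Real.log (xh a₀))
            < xh a₀ * (x a₀ / xh a₀ - 1) := this
          _ = x a₀ - xh a₀ := by field_simp [(hxh a₀).ne']
    rwa [Finset.sum_sub_distrib, hx1, hxh1, sub_self] at hlt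
  have : ∑ a, xh a * (Real.log (xh a) - Real.log (x a)) =
      -∑ a, xh a * (Real.log (x a) - Real.log (xh a)) := by
    rw [← Finset.sum_neg_distrib]; congr 1; ext a; ring
  rw [this]; linarith

theorem iss_implies_lyapunov_stable {α : Type*} [Fintype α]
    (φ : (α → ℝ) → (α → ℝ)) (hφ : ContDiff ℝ 1 φ)
    (xh : α → ℝ) (hxh : xh ∈ {x : α → ℝ | (∀ a, 0 < x a) ∧ ∑ a, x a = 1})
    (hrest : ∀ a, φ xh a = xh a * ∑ b, φ xh b)
    (N : Set (α → ℝ)) (hN : N ∈ nhds xh)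
    (hISS : ∀ x ∈ N, (∀ a, 0 < x a) → ∑ a, x a = 1 → x ≠ xh →
      (∑ a, ((x a - xh a) / x a) * φ x a) < 0) :
    ∀ U ∈ nhdsWithin xh {x : α → ℝ | (∀ a, 0 < x a) ∧ ∑ a, x a = 1},
      ∃ W ∈ nhdsWithin xh {x : α → ℝ | (∀ a, 0 < x a) ∧ ∑ a, x a = 1},
        W ⊆ U ∧
        ∀ x : ℝ → α → ℝ,
          (∀ t : ℝ, 0 ≤ t → x t ∈ {x : α → ℝ | (∀ a, 0 < x a) ∧ ∑ a, x a = 1}) →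
          (∀ t : ℝ, 0 ≤ t → ∀ a, HasDerivAt (fun s => x s a)
            (φ (x t) a - x t a * ∑ b, φ (x t) b) t) →
          x 0 ∈ W → ∀ t : ℝ, 0 ≤ t → x t ∈ U := by
  obtain ⟨hxhpos, hxh1⟩ := hxh
  set S : Set (α → ℝ) := {x : α → ℝ | (∀ a, 0 < x a) ∧ ∑ a, x a = 1} with hS
  set P : Set (α → ℝ) := {x : α → ℝ | ∀ a, 0 < x a} with hP
  have hPopen : IsOpen P := by
    have : P = ⋂ a, (fun x : α → ℝ => x a) ⁻¹' Set.Ioi 0 := by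
      ext y; simp [hP, Set.mem_iInter]
    rw [this]
    exact isOpen_iInter_of_finite fun a => (continuous_apply a).isOpen_preimage _ isOpen_Ioi
  -- the Lyapunov function
  set Vf : (α → ℝ) → ℝ := fun y => ∑ a, xh a * (Real.log (xh a) - Real.log (y a)) with hVf
  have hVcont : ContinuousOn Vf P := by
    refine continuousOn_finset_sum _ fun a _ => fun y hy => ?_
    have h2 : ContinuousAt (fun p : α → ℝ => p a) y := (continuous_apply a).continuousAt
    have h1 : ContinuousAt (fun p : α → ℝ => Real.log (p a)) y :=
      h2.log (hy a).ne'
    exact (continuousAt_const.mul (continuousAt_const.sub h1)).continuousWithinAt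
  have hV0 : Vf xh = 0 := by simp [hVf]
  intro U hU
  obtain ⟨V', hV'open, hxhV', hV'U⟩ := mem_nhdsWithin.mp hU
  -- choose ε with closedBall ⊆ V' ∩ N ∩ P
  have hnhd : V' ∩ N ∩ P ∈ nhds xh :=
    Filter.inter_mem (Filter.inter_mem (hV'open.mem_nhds hxhV') hN)
      (hPopen.mem_nhds hxhpos)
  obtain ⟨ε, εpos, hball⟩ := Metric.nhds_basis_closedBall.mem_iff.mp hnhd
  -- the compact "exit" set and a positive lower bound m of Vf on it
  set K : Set (α → ℝ) := Metric.sphere xh ε ∩ {y | ∑ a, y a = 1} with hK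
  have hKP : K ⊆ P := fun y hy =>
    (hball (Metric.sphere_subset_closedBall hy.1)).2
  have hKcompact : IsCompact K :=
    (isCompact_sphere xh ε).inter_right
      (isClosed_eq (continuous_finset_sum _ fun a _ => continuous_apply a) continuous_const)
  obtain ⟨m, mpos, hm⟩ : ∃ m, 0 < m ∧ ∀ y ∈ K, m ≤ Vf y := by
    rcases K.eq_empty_or_nonempty with hKe | hKne
    · exact ⟨1, one_pos, fun y hy => by simp [hKe] at hy⟩
    · obtain ⟨y₀, hy₀K, hy₀min⟩ :=
        hKcompact.exists_isMinOn hKne (hVcont.mono hKP)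
      refine ⟨Vf y₀, ?_, hy₀min⟩
      have hy₀ne : y₀ ≠ xh := by
        intro h
        have := hy₀K.1
        rw [h, Metric.mem_sphere, dist_self] at this
        exact εpos.ne this
      exact iss_V_pos xh y₀ hxhpos (hKP hy₀K) hxh1 hy₀K.2 hy₀ne
  -- the neighborhood W
  set O : Set (α → ℝ) := Metric.ball xh ε ∩ (P ∩ Vf ⁻¹' Set.Iio m) with hO
  have hOopen : IsOpen O :=
    Metric.isOpen_ball.inter (hVcont.isOpen_inter_preimage hPopen isOpen_Iio)
  have hxhO : xh ∈ O :=
    ⟨Metric.mem_ball_self εpos, hxhpos, by simp [hV0, mpos]⟩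
  refine ⟨O ∩ S, mem_nhdsWithin.mpr ⟨O, hOopen, hxhO, Set.Subset.rfl⟩, ?_, ?_⟩
  · intro y hy
    exact hV'U ⟨(hball (Metric.ball_subset_closedBall hy.1.1)).1.1, hy.2⟩
  intro x hxS hxd hx0 t ht
  by_contra hcon
  -- continuity of the trajectory
  have hxcont : ∀ s : ℝ, 0 ≤ s → ContinuousAt x s := fun s hs =>
    continuousAt_pi.mpr fun a => (hxd s hs a).continuousAt
  set f : ℝ → ℝ := fun s => dist (x s) xh with hf
  have hfcont : ∀ s : ℝ, 0 ≤ s → ContinuousAt f s := fun s hs =>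
    (hxcont s hs).dist continuousAt_const
  set E : Set ℝ := {s | 0 ≤ s ∧ ε ≤ f s} with hE
  have hEne : E.Nonempty := by
    refine ⟨t, ht, ?_⟩
    by_contra hlt
    push_neg at hlt
    exact hcon (hV'U ⟨(hball (Metric.ball_subset_closedBall hlt)).1.1, hxS t ht⟩)
  have hEbdd : BddBelow E := ⟨0, fun s hs => hs.1⟩
  set t₁ : ℝ := sInf E with ht₁def
  have ht₁0 : 0 ≤ t₁ := le_csInf hEne fun s hs => hs.1
  have ht₁cl : t₁ ∈ closure E := csInf_mem_closure hEne hEbdd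
  have ht₁ge : ε ≤ f t₁ := by
    haveI hne : (nhdsWithin t₁ E).NeBot := mem_closure_iff_nhdsWithin_neBot.mp ht₁cl
    refine ge_of_tendsto
      ((hfcont t₁ ht₁0).tendsto.mono_left (nhdsWithin_le_nhds (s := E))) ?_
    filter_upwards [self_mem_nhdsWithin] with s hs using hs.2
  have hf0 : f 0 < ε := hx0.1.1
  have ht₁pos : 0 < t₁ := by
    rcases ht₁0.lt_or_eq with h | h
    · exact h
    · exfalso; rw [← h] at ht₁ge; linarith
  have hlt : ∀ s, 0 ≤ s → s < t₁ → f s < ε := by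
    intro s hs hst
    by_contra h
    push_neg at h
    exact absurd (csInf_le hEbdd ⟨hs, h⟩) (not_le.mpr hst)
  have ht₁le : f t₁ ≤ ε := by
    haveI hne : (nhdsWithin t₁ (Set.Ico 0 t₁)).NeBot := by
      refine mem_closure_iff_nhdsWithin_neBot.mp ?_
      rw [closure_Ico ht₁pos.ne]
      exact ⟨ht₁0, le_refl t₁⟩
    refine le_of_tendsto
      ((hfcont t₁ ht₁0).tendsto.mono_left (nhdsWithin_le_nhds (s := Set.Ico 0 t₁))) ?_
    filter_upwards [self_mem_nhdsWithin] with s hs using (hlt s hs.1 hs.2).le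
  have hIcc : ∀ s ∈ Set.Icc 0 t₁, x s ∈ V' ∩ N ∩ P := by
    intro s hs
    rcases hs.2.lt_or_eq with h | h
    · exact hball (Metric.mem_closedBall.mpr (hlt s hs.1 h).le)
    · rw [h]; exact hball (Metric.mem_closedBall.mpr ht₁le)
  -- the Lyapunov function along the trajectory
  set g : ℝ → ℝ := fun s => Vf (x s) with hg
  have hgderiv : ∀ s ∈ Set.Icc (0:ℝ) t₁,
      HasDerivAt g (∑ a, ((x s a - xh a) / x s a) * φ (x s) a) s := by
    intro s hs
    have hpos : ∀ a, 0 < x s a := (hxS s hs.1).1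
    have hsum1 : ∑ a, x s a = 1 := (hxS s hs.1).2
    have hterm : ∀ a : α, HasDerivAt (fun r => xh a * (Real.log (xh a) - Real.log (x r a)))
        (xh a * (-((x s a)⁻¹ * (φ (x s) a - x s a * ∑ b, φ (x s) b)))) s := by
      intro a
      have hlog : HasDerivAt (fun r => Real.log (x r a))
          ((x s a)⁻¹ * (φ (x s) a - x s a * ∑ b, φ (x s) b)) s := by
        have := (Real.hasDerivAt_log (hpos a).ne').comp s (hxd s hs.1 a); exact this
      exact (hlog.const_sub (Real.log (xh a))).const_mul (xh a)
    have hsum : HasDerivAt g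
        (∑ a, xh a * (-((x s a)⁻¹ * (φ (x s) a - x s a * ∑ b, φ (x s) b)))) s :=
      HasDerivAt.fun_sum fun a _ => hterm a
    have heq : (∑ a, xh a * (-((x s a)⁻¹ * (φ (x s) a - x s a * ∑ b, φ (x s) b)))) =
        ∑ a, ((x s a - xh a) / x s a) * φ (x s) a := by
      have h1 : ∀ a : α, xh a * (-((x s a)⁻¹ * (φ (x s) a - x s a * ∑ b, φ (x s) b))) =
          xh a * (∑ b, φ (x s) b) - xh a * φ (x s) a / x s a := by
        intro a; field_simp [(hpos a).ne']; ring
      have h2 : ∀ a : α, ((x s a - xh a) / x s a) * φ (x s) a =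
          φ (x s) a - xh a * φ (x s) a / x s a := by
        intro a; field_simp [(hpos a).ne']
      simp only [h1, h2, Finset.sum_sub_distrib, ← Finset.sum_mul, hxh1, one_mul]
    rwa [heq] at hsum
  have hderivle : ∀ s ∈ Set.Ioo (0:ℝ) t₁,
      (∑ a, ((x s a - xh a) / x s a) * φ (x s) a) ≤ 0 := by
    intro s hs
    have hsIcc : s ∈ Set.Icc (0:ℝ) t₁ := ⟨hs.1.le, hs.2.le⟩
    by_cases hxe : x s = xh
    · apply le_of_eq
      rw [hxe]
      apply Finset.sum_eq_zero
      intro a _; simp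
    · exact (hISS (x s) (hIcc s hsIcc).1.2 (hxS s hs.1.le).1 (hxS s hs.1.le).2 hxe).le
  have hanti : AntitoneOn g (Set.Icc 0 t₁) := by
    apply antitoneOn_of_deriv_nonpos (convex_Icc 0 t₁)
    · exact fun s hs => (hgderiv s hs).continuousAt.continuousWithinAt
    · rw [interior_Icc]
      exact fun s hs => (hgderiv s ⟨hs.1.le, hs.2.le⟩).differentiableAt.differentiableWithinAt
    · rw [interior_Icc]
      intro s hs
      rw [(hgderiv s ⟨hs.1.le, hs.2.le⟩).deriv]
      exact hderivle s hs
  have h1 : g t₁ ≤ g 0 :=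
    hanti ⟨le_refl 0, ht₁0⟩ ⟨ht₁0, le_refl t₁⟩ ht₁0
  have h2 : g 0 < m := hx0.1.2.2
  have h3 : m ≤ g t₁ := by
    apply hm
    constructor
    · exact Metric.mem_sphere.mpr (le_antisymm ht₁le ht₁ge)
    · exact (hxS t₁ ht₁0).2
  linarith
end
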